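/- Let $A$ be a strictly upper-triangular $n \times n$ integer matrix, $\lambda \in \mathbb{R}^n$, and for $I \subseteq \{1,\dots,n\}$ nonempty let $p_I \in \mathbb{R}^n$ be the unique point with $\langle p_I, e_j\rangle = 0$ for $j \notin I$ and $\langle p_I, e_j + \sum_i A^i_j e_i\rangle = \lambda_j$ for $j \in I$. Then for every $j \in I$, $\langle p_I, e_j\rangle = \Xi([j] \cap I)$, where $\Xi(J) = \sum (-1)^m \lambda_{i_0} A^{i_0}_{i_1} \cdots A^{i_{m-1}}_{i_m}$ summed over chains $i_0 < \cdots < i_m = \max(J)$ contained in $J$, and $[j] = \{1,\dots,j\}$. -/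

import Mathlib

open Finset

/-- `Λ(J)`: for `J = {i₀ < ⋯ < i_m}`, the value `(-1)^m λ_{i₀} A^{i₀}_{i₁} ⋯ A^{i_{m-1}}_{i_m}`. -/
noncomputable def chainVal {n : ℕ} (A : Fin n → Fin n → ℤ) (lam : Fin n → ℝ)
    (J : Finset (Fin n)) : ℝ :=
  match J.sort (· ≤ ·) with
  | [] => 0
  | a :: rest =>
      (-1 : ℝ) ^ rest.length * lam a *
        (((a :: rest).zip rest).map (fun p => (A p.1 p.2 : ℝ))).prod

/-- `Ξ(I)`: sum of `Λ(J)` over nonempty `J ⊆ I` with `max J = max I`. -/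
noncomputable def XiVal {n : ℕ} (A : Fin n → Fin n → ℤ) (lam : Fin n → ℝ)
    (I : Finset (Fin n)) : ℝ :=
  ∑ J ∈ I.powerset.filter (fun J => J.max = I.max), chainVal A lam J

lemma zip_concat {α : Type*} : ∀ (rest : List α) (a j : α),
    ((a :: rest) ++ [j]).zip (rest ++ [j])
      = (a :: rest).zip rest ++ [((a :: rest).getLast (List.cons_ne_nil a rest), j)] := by
  intro rest
  induction rest with
  | nil => intro a j; simp
  | cons b t ih =>
    intro a j
    have := ih b j
    simp only [List.cons_append, List.zip_cons_cons] at *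
    rw [this]
    simp [List.getLast_cons]

lemma chainVal_eq {n : ℕ} (A : Fin n → Fin n → ℤ) (lam : Fin n → ℝ)
    {J : Finset (Fin n)} {a : Fin n} {rest : List (Fin n)}
    (h : J.sort (· ≤ ·) = a :: rest) :
    chainVal A lam J = (-1 : ℝ) ^ rest.length * lam a *
        (((a :: rest).zip rest).map (fun p => (A p.1 p.2 : ℝ))).prod := by
  unfold chainVal
  rw [h]

lemma chainVal_singleton {n : ℕ} (A : Fin n → Fin n → ℤ) (lam : Fin n → ℝ) (j : Fin n) :
    chainVal A lam {j} = lam j := by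
  rw [chainVal_eq A lam (Finset.sort_singleton (· ≤ ·) j)]
  simp

lemma sort_insert_max {n : ℕ} (J : Finset (Fin n)) (j : Fin n) (h : ∀ x ∈ J, x < j) :
    (insert j J).sort (· ≤ ·) = J.sort (· ≤ ·) ++ [j] := by
  have hj : j ∉ J := fun hm => lt_irrefl j (h j hm)
  refine List.Perm.eq_of_pairwise' (Finset.pairwise_sort _ _) ?_ ?_
  · rw [List.pairwise_append]
    refine ⟨Finset.pairwise_sort _ _, List.pairwise_singleton _ _, ?_⟩
    intro a ha b hb
    rw [List.mem_singleton] at hb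
    exact hb ▸ (h a (by simpa using ha)).le
  · exact (Finset.sort_perm_toList (insert j J) (· ≤ ·)).trans <|
      (Finset.toList_insert hj).trans <|
      ((List.perm_append_singleton _ _).symm).trans <|
      ((Finset.sort_perm_toList J (· ≤ ·)).symm).append_right _

lemma chainVal_insert {n : ℕ} (A : Fin n → Fin n → ℤ) (lam : Fin n → ℝ)
    {J : Finset (Fin n)} (hJ : J.Nonempty) {j : Fin n} (h : ∀ x ∈ J, x < j) :
    chainVal A lam (insert j J) = -(A (J.max' hJ) j : ℝ) * chainVal A lam J := by
  have hne : J.sort (· ≤ ·) ≠ [] := fun hnil => by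
    have := (Finset.mem_sort (α := Fin n) (· ≤ ·)).mpr (J.max'_mem hJ)
    rw [hnil] at this
    exact absurd this List.not_mem_nil
  obtain ⟨a, rest, hl⟩ := List.exists_cons_of_ne_nil hne
  have hins : (insert j J).sort (· ≤ ·) = a :: (rest ++ [j]) := by
    rw [sort_insert_max J j h, hl]; simp
  have hlast : (a :: rest).getLast (List.cons_ne_nil a rest) = J.max' hJ := by
    rw [Finset.max'_eq_sorted_last]
    simp only [hl]
    exact List.getLast_eq_getElem _
  rw [chainVal_eq A lam hins, chainVal_eq A lam hl, ← List.cons_append, zip_concat, hlast]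
  simp only [List.map_append, List.prod_append, List.length_append, List.length_singleton,
    List.map_cons, List.map_nil, List.prod_cons, List.prod_nil, pow_succ]
  ring

lemma filter_max_eq {n : ℕ} (I : Finset (Fin n)) (i : Fin n) (hi : i ∈ I) :
    (I.filter (· ≤ i)).max = (i : WithBot (Fin n)) := by
  have hmem : i ∈ I.filter (· ≤ i) := Finset.mem_filter.mpr ⟨hi, le_refl i⟩
  apply le_antisymm
  · exact Finset.max_le fun x hx => WithBot.coe_le_coe.mpr (Finset.mem_filter.mp hx).2
  · exact Finset.le_max hmem

/-- **Coordinates of the point `p_I`: `⟨p_I, e_j⟩ = Ξ([j] ∩ I)` for `j ∈ I`.** -/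
theorem pI_coords {n : ℕ} (A : Fin n → Fin n → ℤ)
    (hA : ∀ i j : Fin n, j ≤ i → A i j = 0) (lam : Fin n → ℝ)
    (I : Finset (Fin n)) (p : Fin n → ℝ)
    (hp0 : ∀ j ∉ I, p j = 0)
    (hp1 : ∀ j ∈ I, p j + ∑ i, (A i j : ℝ) * p i = lam j) :
    ∀ j ∈ I, p j = XiVal A lam (I.filter (· ≤ j)) := by
  suffices h : ∀ m : ℕ, ∀ j : Fin n, j.val = m → j ∈ I → p j = XiVal A lam (I.filter (· ≤ j)) by
    intro j hj; exact h j.val j rfl hj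
  intro m
  induction m using Nat.strong_induction_on with
  | _ m IHm =>
    rintro j rfl hj
    have IH : ∀ i : Fin n, i < j → i ∈ I → p i = XiVal A lam (I.filter (· ≤ i)) :=
      fun i hij hi => IHm i.val hij i rfl hi
    set T : Finset (Fin n) := I.filter (fun i => i < j) with hTdef
    -- step 1 : p j = lam j - ∑ i ∈ T, A i j * p i
    have step1 : p j = lam j - ∑ i ∈ T, (A i j : ℝ) * p i := by
      have h1 := hp1 j hj
      have h2 : ∑ i ∈ T, (A i j : ℝ) * p i = ∑ i, (A i j : ℝ) * p i := by
        apply Finset.sum_subset (Finset.subset_univ T)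
        intro i _ hiT
        by_cases hiI : i ∈ I
        · have hlt : ¬ i < j := fun hc => hiT (Finset.mem_filter.mpr ⟨hiI, hc⟩)
          rw [hA i j (le_of_not_gt hlt)]
          simp
        · rw [hp0 i hiI, mul_zero]
      rw [h2]; linarith
    -- decompose XiVal (S j)
    have hmaxS : (I.filter (· ≤ j)).max = (j : WithBot (Fin n)) := filter_max_eq I j hj
    have hbij : XiVal A lam (I.filter (· ≤ j))
        = ∑ J' ∈ T.powerset, chainVal A lam (insert j J') := by
      unfold XiVal
      rw [hmaxS]
      refine Finset.sum_nbij' (fun J => J.erase j) (fun J' => insert j J') ?_ ?_ ?_ ?_ ?_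
      · intro J hJ
        rw [Finset.mem_filter, Finset.mem_powerset] at hJ
        rw [Finset.mem_powerset]
        intro x hx
        rw [Finset.mem_erase] at hx
        have := hJ.1 hx.2
        rw [Finset.mem_filter] at this
        exact Finset.mem_filter.mpr ⟨this.1, lt_of_le_of_ne this.2 hx.1⟩
      · intro J' hJ'
        rw [Finset.mem_powerset] at hJ'
        rw [Finset.mem_filter, Finset.mem_powerset]
        constructor
        · intro x hx
          rcases Finset.mem_insert.mp hx with rfl | hx'
          · exact Finset.mem_filter.mpr ⟨hj, le_refl x⟩
          · have := hJ' hx'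
            rw [Finset.mem_filter] at this
            exact Finset.mem_filter.mpr ⟨this.1, this.2.le⟩
        · show (insert j J').max = (j : WithBot (Fin n))
          apply le_antisymm
          · apply Finset.max_le
            intro x hx
            rcases Finset.mem_insert.mp hx with rfl | hx'
            · exact le_refl _
            · exact WithBot.coe_le_coe.mpr (Finset.mem_filter.mp (hJ' hx')).2.le
          · exact Finset.le_max (Finset.mem_insert_self j J')
      · intro J hJ
        rw [Finset.mem_filter] at hJ
        exact Finset.insert_erase (Finset.mem_of_max hJ.2)
      · intro J' hJ'
        rw [Finset.mem_powerset] at hJ'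
        apply Finset.erase_insert
        intro hc
        exact absurd (Finset.mem_filter.mp (hJ' hc)).2 (lt_irrefl j)
      · intro J hJ
        rw [Finset.mem_filter] at hJ
        rw [Finset.insert_erase (Finset.mem_of_max hJ.2)]
    -- split off the empty set
    have hsplit : ∑ J' ∈ T.powerset, chainVal A lam (insert j J')
        = lam j + ∑ J' ∈ T.powerset.filter (·.Nonempty), chainVal A lam (insert j J') := by
      rw [← Finset.sum_filter_add_sum_filter_not T.powerset (·.Nonempty)]
      have hempty : T.powerset.filter (fun J => ¬ J.Nonempty) = {∅} := by
        ext J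
        simp only [Finset.mem_filter, Finset.mem_powerset, Finset.not_nonempty_iff_eq_empty,
          Finset.mem_singleton, and_iff_right_iff_imp]
        exact fun h => h ▸ Finset.empty_subset T
      rw [hempty, Finset.sum_singleton, Finset.insert_empty, chainVal_singleton]
      ring
    -- fiberwise decomposition over the max
    have hfib : ∑ J' ∈ T.powerset.filter (·.Nonempty), chainVal A lam (insert j J')
        = ∑ i ∈ T, ∑ J' ∈ (T.powerset.filter (·.Nonempty)).filter
              (fun J => J.max = (i : WithBot (Fin n))), chainVal A lam (insert j J') := by
      have hmap : ∀ J ∈ T.powerset.filter (·.Nonempty),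
          (fun J : Finset (Fin n) => WithBot.unbotD j J.max) J ∈ T := by
        intro J hJ
        rw [Finset.mem_filter, Finset.mem_powerset] at hJ
        show (WithBot.unbotD j J.max) ∈ T
        rw [← Finset.coe_max' hJ.2, WithBot.unbotD_coe]
        exact hJ.1 (J.max'_mem hJ.2)
      rw [← Finset.sum_fiberwise_of_maps_to hmap (fun J => chainVal A lam (insert j J))]
      · apply Finset.sum_congr rfl
        intro i _
        apply Finset.sum_congr ?_ (fun _ _ => rfl)
        ext J
        simp only [Finset.mem_filter]
        constructor
        · rintro ⟨⟨h1, h2⟩, h3⟩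
          refine ⟨⟨h1, h2⟩, ?_⟩
          rw [← Finset.coe_max' h2] at h3 ⊢
          simp only [WithBot.unbotD_coe] at h3
          exact_mod_cast h3
        · rintro ⟨⟨h1, h2⟩, h3⟩
          exact ⟨⟨h1, h2⟩, by rw [h3]; rfl⟩
    -- the inner sum
    have hinner : ∀ i ∈ T, ∑ J' ∈ (T.powerset.filter (·.Nonempty)).filter
            (fun J => J.max = (i : WithBot (Fin n))), chainVal A lam (insert j J')
          = -((A i j : ℝ) * XiVal A lam (I.filter (· ≤ i))) := by
      intro i hiT
      have hiI : i ∈ I := (Finset.mem_filter.mp hiT).1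
      have hij : i < j := (Finset.mem_filter.mp hiT).2
      have hmaxSi : (I.filter (· ≤ i)).max = (i : WithBot (Fin n)) := filter_max_eq I i hiI
      have hseteq : (I.filter (· ≤ i)).powerset.filter
            (fun J => J.max = (I.filter (· ≤ i)).max)
          = (T.powerset.filter (·.Nonempty)).filter
            (fun J => J.max = (i : WithBot (Fin n))) := by
        rw [hmaxSi]
        ext J
        simp only [Finset.mem_filter, Finset.mem_powerset]
        constructor
        · rintro ⟨hsub, hmax⟩
          have hne : J.Nonempty := by
            rcases Finset.eq_empty_or_nonempty J with rfl | hne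
            · simp at hmax
            · exact hne
          refine ⟨⟨?_, hne⟩, hmax⟩
          intro x hx
          have := Finset.mem_filter.mp (hsub hx)
          exact Finset.mem_filter.mpr ⟨this.1, lt_of_le_of_lt this.2 hij⟩
        · rintro ⟨⟨hsub, _⟩, hmax⟩
          refine ⟨?_, hmax⟩
          intro x hx
          have h1 := Finset.mem_filter.mp (hsub hx)
          have h2 : (x : WithBot (Fin n)) ≤ (i : WithBot (Fin n)) :=
            hmax ▸ Finset.le_max hx
          exact Finset.mem_filter.mpr ⟨h1.1, WithBot.coe_le_coe.mp h2⟩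
      unfold XiVal
      rw [hseteq, Finset.mul_sum, ← Finset.sum_neg_distrib]
      apply Finset.sum_congr rfl
      intro J hJ
      simp only [Finset.mem_filter, Finset.mem_powerset] at hJ
      obtain ⟨⟨hsub, hne⟩, hmax⟩ := hJ
      have hlt' : ∀ x ∈ J, x < j := fun x hx => (Finset.mem_filter.mp (hsub hx)).2
      have hmax' : J.max' hne = i := by
        have := Finset.coe_max' hne
        rw [hmax] at this
        exact_mod_cast this
      rw [chainVal_insert A lam hne hlt', hmax']
      ring
    -- put it together
    have step2 : XiVal A lam (I.filter (· ≤ j))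
        = lam j - ∑ i ∈ T, (A i j : ℝ) * XiVal A lam (I.filter (· ≤ i)) := by
      rw [hbij, hsplit, hfib, Finset.sum_congr rfl hinner, Finset.sum_neg_distrib]
      ring
    rw [step2, step1]
    congr 1
    apply Finset.sum_congr rfl
    intro i hiT
    rw [IH i (Finset.mem_filter.mp hiT).2 (Finset.mem_filter.mp hiT).1]
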